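/- Every ψ-type social choice function (associated with distinct alternatives a, b, a value x ∈ {a,b}, and a double collection with respect to {a,b}) is coalitionally strategy-proof. -/

import Mathlib

universe u v

variable {V : Type u} {A : Type v}

/-- A weak ordering on `A`: a complete (total) and transitive binary relation. -/
abbrev WeakOrd (A : Type v) := {W : A → A → Prop // Total W ∧ Transitive W}

/-- A profile assigns to every voter a weak ordering on the alternatives. -/
abbrev Profile (V : Type u) (A : Type v) := V → WeakOrd A

/-- Strict preference `x ≻_W y`. -/
def SPref (W : WeakOrd A) (x y : A) : Prop := W.1 x y ∧ ¬ W.1 y x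

/-- Indifference `x ∼_W y`. -/
def Indiff (W : WeakOrd A) (x y : A) : Prop := W.1 x y ∧ W.1 y x

/-- `D(a,P)` (relative to the pair `{a,b}`): voters strictly preferring `a` to `b`. -/
def Dset (a b : A) (P : Profile V A) : Set V := {v | SPref (P v) a b}

/-- `I(P)`: voters indifferent between `a` and `b`. -/
def Iset (a b : A) (P : Profile V A) : Set V := {v | Indiff (P v) a b}

/-- The `{a,b}`-equivalence set `E(P,Q)`. -/
def Eset (a b : A) (P Q : Profile V A) : Set V :=
  {v | P v = Q v ∨ (SPref (P v) a b ∧ SPref (Q v) a b) ∨ (SPref (P v) b a ∧ SPref (Q v) b a)}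

/-- `P ⊐_a Q`. -/
def DomA (a b : A) (P Q : Profile V A) : Prop :=
  (Set.univ : Set V) = Eset a b P Q ∪ (Iset a b P ∩ Dset a b Q)

/-- `P ⊐_b Q`. -/
def DomB (a b : A) (P Q : Profile V A) : Prop :=
  (Set.univ : Set V) = Eset a b P Q ∪ (Iset a b P ∩ Dset b a Q)

/-- The coalition `D` can manipulate the profile `P` under `φ`. -/
def Manipulates (φ : Profile V A → A) (D : Set V) (P : Profile V A) : Prop :=
  D.Nonempty ∧ ∃ Q : Profile V A, (∀ v ∉ D, Q v = P v) ∧ ∀ v ∈ D, SPref (P v) (φ Q) (φ P)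

/-- Coalitional strategy-proofness. -/
def CSP (φ : Profile V A → A) : Prop :=
  ∀ (D : Set V) (P : Profile V A), ¬ Manipulates φ D P

/-- A superset-closed family on the set `Wset`. -/
def SSCF (Wset : Set V) (F : Set (Set V)) : Prop :=
  (∀ E ∈ F, E ⊆ Wset) ∧ ∀ E₁ E₂ : Set V, E₁ ∈ F → E₁ ⊆ E₂ → E₂ ⊆ Wset → E₂ ∈ F

/-- The dual family `F°` of `F` on `Wset`. -/
def dualF (Wset : Set V) (F : Set (Set V)) : Set (Set V) :=
  {E | E ⊆ Wset ∧ Wset \ E ∉ F}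

/-- The class `𝓟_a(π,F)`, where the partial `{a,b}`-indifference profile `π` has domain `I`. -/
def ClassA (a b : A) (I : Set V) (pc : V → WeakOrd A) (F : Set (Set V)) :
    Set (Profile V A) :=
  {P | Dset a b P ∩ Iᶜ ∈ F ∧ ∀ v ∈ I, P v = pc v ∨ SPref (P v) a b}

/-- The class `𝓟_b(π,F)`, where the partial `{a,b}`-indifference profile `π` has domain `I`. -/
def ClassB (a b : A) (I : Set V) (pc : V → WeakOrd A) (F : Set (Set V)) :
    Set (Profile V A) :=
  {P | Dset b a P ∩ Iᶜ ∈ dualF Iᶜ F ∧ ∀ v ∈ I, P v = pc v ∨ SPref (P v) b a}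

/-- `𝓟_λ = 𝓟_a(π,F) ∪ 𝓟_b(π,F)`. -/
def PClass (a b : A) (I : Set V) (pc : V → WeakOrd A) (F : Set (Set V)) :
    Set (Profile V A) :=
  ClassA a b I pc F ∪ ClassB a b I pc F

/-- The set of indices `λ < β` with `P ∈ 𝓟_λ`; its least element is the index `λ(P)`,
and `λ(P) = ∞` corresponds to this set being empty. -/
def idxSet (a b : A) (β : Ordinal.{max u v}) (I : Ordinal.{max u v} → Set V)
    (pc : Ordinal.{max u v} → V → WeakOrd A) (F : Ordinal.{max u v} → Set (Set V))
    (P : Profile V A) : Set Ordinal.{max u v} :=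
  {l | l < β ∧ P ∈ PClass a b (I l) (pc l) (F l)}

/-- `⟨(π^λ)_{λ<β}, (F_λ)_{λ<β}⟩` is a double collection with respect to `{a,b}`:
`β ≥ 1`, each `π^λ` (with domain `I_λ`) is a partial `{a,b}`-indifference profile and
each `F_λ` is a superset-closed family on `I_λᶜ`. -/
def IsDoubleCollection (a b : A) (β : Ordinal.{max u v}) (I : Ordinal.{max u v} → Set V)
    (pc : Ordinal.{max u v} → V → WeakOrd A) (F : Ordinal.{max u v} → Set (Set V)) : Prop :=
  1 ≤ β ∧ ∀ l < β, (∀ v ∈ I l, Indiff (pc l v) a b) ∧ SSCF (I l)ᶜ (F l)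

/-- `ψ` is the ψ-type scf associated with `x` and the double collection: `ψ P = a` if
`P ∈ 𝓟_a(π^{λ(P)},F_{λ(P)})`, `ψ P = b` if `P ∈ 𝓟_b(π^{λ(P)},F_{λ(P)})`, and `ψ P = x`
if `λ(P) = ∞`. -/
def IsPsiOf (a b x : A) (β : Ordinal.{max u v}) (I : Ordinal.{max u v} → Set V)
    (pc : Ordinal.{max u v} → V → WeakOrd A) (F : Ordinal.{max u v} → Set (Set V))
    (ψ : Profile V A → A) : Prop :=
  ∀ P : Profile V A,
    (∀ l, IsLeast (idxSet a b β I pc F P) l →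
      (P ∈ ClassA a b (I l) (pc l) (F l) → ψ P = a) ∧
      (P ∈ ClassB a b (I l) (pc l) (F l) → ψ P = b)) ∧
    (idxSet a b β I pc F P = ∅ → ψ P = x)

lemma dualF_mono {Wset : Set V} {F : Set (Set V)} (hF : SSCF Wset F)
    {E E' : Set V} (hE : E ∈ dualF Wset F) (hsub : E ⊆ E') (hE' : E' ⊆ Wset) :
    E' ∈ dualF Wset F :=
  ⟨hE', fun h => hE.2 (hF.2 _ _ h (Set.diff_subset_diff_right hsub) Set.diff_subset)⟩

universe w in
lemma exists_least_ord {S : Set Ordinal.{w}} (h : S.Nonempty) : ∃ l, IsLeast S l :=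
  ⟨Ordinal.lt_wf.min S h, Ordinal.lt_wf.min_mem S h,
    fun y hy => not_lt.mp (fun hlt => Ordinal.lt_wf.not_lt_min S hy hlt)⟩

/-- Case ψP = a, ψQ = b (manipulators have b ≻ a in P): P ∈ 𝓟_a(l) implies Q ∈ 𝓟_a(l). -/
lemma case1_A {a b : A} {Il : Set V} {pcl : V → WeakOrd A} {Fl : Set (Set V)}
    (hind : ∀ v ∈ Il, Indiff (pcl v) a b) (hF : SSCF Ilᶜ Fl)
    {D : Set V} {P Q : Profile V A} (hQ : ∀ v ∉ D, Q v = P v)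
    (hD : ∀ v ∈ D, SPref (P v) b a)
    (hP : P ∈ ClassA a b Il pcl Fl) : Q ∈ ClassA a b Il pcl Fl := by
  have hID : ∀ v ∈ Il, v ∉ D := by
    intro v hvI hvD
    rcases hP.2 v hvI with h | h
    · have hab' := (hind v hvI).1
      rw [← h] at hab'
      exact (hD v hvD).2 hab'
    · exact (hD v hvD).2 h.1
  have hsub : Dset a b P ∩ Ilᶜ ⊆ Dset a b Q ∩ Ilᶜ := by
    intro v hv
    have hvD : v ∉ D := fun hvD => (hD v hvD).2 hv.1.1
    exact ⟨show SPref (Q v) a b by rw [hQ v hvD]; exact hv.1, hv.2⟩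
  refine ⟨hF.2 _ _ hP.1 hsub Set.inter_subset_right, fun v hv => ?_⟩
  rw [hQ v (hID v hv)]
  exact hP.2 v hv

/-- Case ψP = a, ψQ = b (manipulators have b ≻ a in P): Q ∈ 𝓟_b(m) implies P ∈ 𝓟_b(m). -/
lemma case1_B {a b : A} {Im : Set V} {pcm : V → WeakOrd A} {Fm : Set (Set V)}
    (hF : SSCF Imᶜ Fm)
    {D : Set V} {P Q : Profile V A} (hQ : ∀ v ∉ D, Q v = P v)
    (hD : ∀ v ∈ D, SPref (P v) b a)
    (hQm : Q ∈ ClassB a b Im pcm Fm) : P ∈ ClassB a b Im pcm Fm := by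
  have hsub : Dset b a Q ∩ Imᶜ ⊆ Dset b a P ∩ Imᶜ := by
    intro v hv
    by_cases hvD : v ∈ D
    · exact ⟨hD v hvD, hv.2⟩
    · exact ⟨show SPref (P v) b a by rw [← hQ v hvD]; exact hv.1, hv.2⟩
  refine ⟨dualF_mono hF hQm.1 hsub Set.inter_subset_right, fun v hv => ?_⟩
  by_cases hvD : v ∈ D
  · exact Or.inr (hD v hvD)
  · rw [← hQ v hvD]
    exact hQm.2 v hv

/-- Case ψP = b, ψQ = a (manipulators have a ≻ b in P): P ∈ 𝓟_b(l) implies Q ∈ 𝓟_b(l). -/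
lemma case2_B {a b : A} {Il : Set V} {pcl : V → WeakOrd A} {Fl : Set (Set V)}
    (hind : ∀ v ∈ Il, Indiff (pcl v) a b) (hF : SSCF Ilᶜ Fl)
    {D : Set V} {P Q : Profile V A} (hQ : ∀ v ∉ D, Q v = P v)
    (hD : ∀ v ∈ D, SPref (P v) a b)
    (hP : P ∈ ClassB a b Il pcl Fl) : Q ∈ ClassB a b Il pcl Fl := by
  have hID : ∀ v ∈ Il, v ∉ D := by
    intro v hvI hvD
    rcases hP.2 v hvI with h | h
    · have hba' := (hind v hvI).2
      rw [← h] at hba'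
      exact (hD v hvD).2 hba'
    · exact (hD v hvD).2 h.1
  have hsub : Dset b a P ∩ Ilᶜ ⊆ Dset b a Q ∩ Ilᶜ := by
    intro v hv
    have hvD : v ∉ D := fun hvD => (hD v hvD).2 hv.1.1
    exact ⟨show SPref (Q v) b a by rw [hQ v hvD]; exact hv.1, hv.2⟩
  refine ⟨dualF_mono hF hP.1 hsub Set.inter_subset_right, fun v hv => ?_⟩
  rw [hQ v (hID v hv)]
  exact hP.2 v hv

/-- Case ψP = b, ψQ = a (manipulators have a ≻ b in P): Q ∈ 𝓟_a(m) implies P ∈ 𝓟_a(m). -/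
lemma case2_A {a b : A} {Im : Set V} {pcm : V → WeakOrd A} {Fm : Set (Set V)}
    (hF : SSCF Imᶜ Fm)
    {D : Set V} {P Q : Profile V A} (hQ : ∀ v ∉ D, Q v = P v)
    (hD : ∀ v ∈ D, SPref (P v) a b)
    (hQm : Q ∈ ClassA a b Im pcm Fm) : P ∈ ClassA a b Im pcm Fm := by
  have hsub : Dset a b Q ∩ Imᶜ ⊆ Dset a b P ∩ Imᶜ := by
    intro v hv
    by_cases hvD : v ∈ D
    · exact ⟨hD v hvD, hv.2⟩
    · exact ⟨show SPref (P v) a b by rw [← hQ v hvD]; exact hv.1, hv.2⟩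
  refine ⟨hF.2 _ _ hQm.1 hsub Set.inter_subset_right, fun v hv => ?_⟩
  by_cases hvD : v ∈ D
  · exact Or.inr (hD v hvD)
  · rw [← hQ v hvD]
    exact hQm.2 v hv

/-- Theorem 4.4: every ψ-type social choice function is coalitionally strategy-proof. -/
theorem psi_type_is_csp (a b x : A) (hab : a ≠ b) (hx : x = a ∨ x = b)
    (β : Ordinal.{max u v}) (I : Ordinal.{max u v} → Set V)
    (pc : Ordinal.{max u v} → V → WeakOrd A) (F : Ordinal.{max u v} → Set (Set V))
    (hDC : IsDoubleCollection a b β I pc F)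
    (ψ : Profile V A → A) (hψ : IsPsiOf a b x β I pc F ψ) :
    CSP ψ := by
  intro D P hman
  obtain ⟨⟨v0, hv0⟩, Q, hQeq, hpref⟩ := hman
  have hne : ψ Q ≠ ψ P := by
    intro h
    have h1 := hpref v0 hv0
    rw [h] at h1
    exact h1.2 h1.1
  have hval : ∀ R : Profile V A, ψ R = a ∨ ψ R = b := by
    intro R
    rcases Set.eq_empty_or_nonempty (idxSet a b β I pc F R) with he | hne'
    · rcases hx with rfl | rfl
      · exact Or.inl ((hψ R).2 he)
      · exact Or.inr ((hψ R).2 he)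
    · obtain ⟨l, hl⟩ := exists_least_ord hne'
      rcases hl.1.2 with h | h
      · exact Or.inl (((hψ R).1 l hl).1 h)
      · exact Or.inr (((hψ R).1 l hl).2 h)
  rcases hval P with hP | hP <;> rcases hval Q with hQv | hQv
  · exact hne (hQv.trans hP.symm)
  · -- ψ P = a, ψ Q = b
    have hD : ∀ v ∈ D, SPref (P v) b a := by
      intro v hv
      have := hpref v hv
      rwa [hP, hQv] at this
    rcases Set.eq_empty_or_nonempty (idxSet a b β I pc F P) with heP | hneP
    · have hxa : x = a := ((hψ P).2 heP).symm.trans hP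
      rcases Set.eq_empty_or_nonempty (idxSet a b β I pc F Q) with heQ | hneQ
      · have hxb : x = b := ((hψ Q).2 heQ).symm.trans hQv
        exact hab (hxa.symm.trans hxb)
      · obtain ⟨m, hm⟩ := exists_least_ord hneQ
        have hQB : Q ∈ ClassB a b (I m) (pc m) (F m) := by
          rcases hm.1.2 with h | h
          · exact absurd ((((hψ Q).1 m hm).1 h).symm.trans hQv) hab
          · exact h
        have hPB := case1_B (hDC.2 m hm.1.1).2 hQeq hD hQB
        have hmP : m ∈ idxSet a b β I pc F P := ⟨hm.1.1, Set.mem_union_right _ hPB⟩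
        rw [heP] at hmP
        exact hmP
    · obtain ⟨l, hl⟩ := exists_least_ord hneP
      have hPA : P ∈ ClassA a b (I l) (pc l) (F l) := by
        rcases hl.1.2 with h | h
        · exact h
        · exact absurd ((((hψ P).1 l hl).2 h).symm.trans hP) (Ne.symm hab)
      have hQA := case1_A (hDC.2 l hl.1.1).1 (hDC.2 l hl.1.1).2 hQeq hD hPA
      have hlQ : l ∈ idxSet a b β I pc F Q := ⟨hl.1.1, Set.mem_union_left _ hQA⟩
      obtain ⟨m, hm⟩ := exists_least_ord ⟨l, hlQ⟩
      have hQB : Q ∈ ClassB a b (I m) (pc m) (F m) := by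
        rcases hm.1.2 with h | h
        · exact absurd ((((hψ Q).1 m hm).1 h).symm.trans hQv) hab
        · exact h
      have hPB := case1_B (hDC.2 m hm.1.1).2 hQeq hD hQB
      have hmP : m ∈ idxSet a b β I pc F P := ⟨hm.1.1, Set.mem_union_right _ hPB⟩
      have hml : m = l := le_antisymm (hm.2 hlQ) (hl.2 hmP)
      have : ψ P = b := ((hψ P).1 l hl).2 (hml ▸ hPB)
      exact hab (hP.symm.trans this)
  · -- ψ P = b, ψ Q = a
    have hD : ∀ v ∈ D, SPref (P v) a b := by
      intro v hv
      have := hpref v hv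
      rwa [hP, hQv] at this
    rcases Set.eq_empty_or_nonempty (idxSet a b β I pc F P) with heP | hneP
    · have hxb : x = b := ((hψ P).2 heP).symm.trans hP
      rcases Set.eq_empty_or_nonempty (idxSet a b β I pc F Q) with heQ | hneQ
      · have hxa : x = a := ((hψ Q).2 heQ).symm.trans hQv
        exact hab (hxa.symm.trans hxb)
      · obtain ⟨m, hm⟩ := exists_least_ord hneQ
        have hQA : Q ∈ ClassA a b (I m) (pc m) (F m) := by
          rcases hm.1.2 with h | h
          · exact h
          · exact absurd ((((hψ Q).1 m hm).2 h).symm.trans hQv) (Ne.symm hab)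
        have hPA := case2_A (hDC.2 m hm.1.1).2 hQeq hD hQA
        have hmP : m ∈ idxSet a b β I pc F P := ⟨hm.1.1, Set.mem_union_left _ hPA⟩
        rw [heP] at hmP
        exact hmP
    · obtain ⟨l, hl⟩ := exists_least_ord hneP
      have hPB : P ∈ ClassB a b (I l) (pc l) (F l) := by
        rcases hl.1.2 with h | h
        · exact absurd ((((hψ P).1 l hl).1 h).symm.trans hP) hab
        · exact h
      have hQB := case2_B (hDC.2 l hl.1.1).1 (hDC.2 l hl.1.1).2 hQeq hD hPB
      have hlQ : l ∈ idxSet a b β I pc F Q := ⟨hl.1.1, Set.mem_union_right _ hQB⟩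
      obtain ⟨m, hm⟩ := exists_least_ord ⟨l, hlQ⟩
      have hQA : Q ∈ ClassA a b (I m) (pc m) (F m) := by
        rcases hm.1.2 with h | h
        · exact h
        · exact absurd ((((hψ Q).1 m hm).2 h).symm.trans hQv) (Ne.symm hab)
      have hPA := case2_A (hDC.2 m hm.1.1).2 hQeq hD hQA
      have hmP : m ∈ idxSet a b β I pc F P := ⟨hm.1.1, Set.mem_union_left _ hPA⟩
      have hml : m = l := le_antisymm (hm.2 hlQ) (hl.2 hmP)
      have : ψ P = a := ((hψ P).1 l hl).1 (hml ▸ hPA)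
      exact hab (this.symm.trans hP)
  · exact hne (hQv.trans hP.symm)
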